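/- For every real λ > 0 and integers n, m, l with 1 ≤ l < m ≤ n, one has s_n(λ) · s_{n−m}(λ) < s_{n−l}(λ) · s_{n−m+l}(λ). -/

import Mathlib

/-- The `n`-th partial sum of the Taylor series of the exponential function. -/
noncomputable def s (n : ℕ) (a : ℝ) : ℝ :=
  ∑ j ∈ Finset.range (n + 1), a ^ j / (Nat.factorial j : ℝ)

lemma factlt (j q d : ℕ) (hj : j ≤ q) (hd : 1 ≤ d) :
    (j + d).factorial * (q + 1).factorial < j.factorial * (q + d + 1).factorial := by
  induction d with
  | zero => omega
  | succ d ih =>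
    rcases Nat.eq_or_lt_of_le hd with h1 | h1
    · -- d = 0 case of succ, i.e. d+1 = 1
      have hd0 : d = 0 := by omega
      subst hd0
      simp only [Nat.factorial_succ]
      have : j + 1 < q + 1 + 1 := by omega
      calc (j+1) * j.factorial * (q+1).factorial
          < (q+1+1) * (j.factorial * (q+1).factorial) := by
            rw [mul_assoc]
            exact Nat.mul_lt_mul_of_lt_of_le this (le_refl _) (by positivity)
        _ = j.factorial * ((q+1+1) * (q+1).factorial) := by ring
    · have hd' : 1 ≤ d := by omega
      have := ih hd'
      have h2 : j + (d+1) = (j + d) + 1 := by omega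
      rw [h2, Nat.factorial_succ]
      have h3 : q + (d+1) + 1 = (q + d + 1) + 1 := by omega
      rw [h3, Nat.factorial_succ]
      have hle : j + d + 1 ≤ q + d + 1 + 1 := by omega
      calc (j + d + 1) * (j+d).factorial * (q+1).factorial
          = (j + d + 1) * ((j+d).factorial * (q+1).factorial) := by ring
        _ < (j + d + 1) * (j.factorial * (q + d + 1).factorial) := by
            exact Nat.mul_lt_mul_of_le_of_lt (le_refl _) this (by omega)
        _ ≤ (q + d + 1 + 1) * (j.factorial * (q + d + 1).factorial) :=
            Nat.mul_le_mul_right _ hle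
        _ = j.factorial * ((q + d + 1 + 1) * (q + d + 1).factorial) := by ring

lemma spos (n : ℕ) {a : ℝ} (ha : 0 < a) : 0 < s n a := by
  apply Finset.sum_pos
  · intro i _
    positivity
  · exact Finset.nonempty_range_add_one

lemma core {a : ℝ} (ha : 0 < a) {p q : ℕ} (h : q < p) :
    a ^ (p+1) / (p+1).factorial * s q a < a ^ (q+1) / (q+1).factorial * s p a := by
  obtain ⟨d, hd, rfl⟩ : ∃ d, 1 ≤ d ∧ p = q + d := ⟨p - q, by omega, by omega⟩
  rw [s, s, Finset.mul_sum, Finset.mul_sum]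
  have key : ∀ j ∈ Finset.range (q+1),
      a ^ (q+d+1) / ((q+d+1).factorial : ℝ) * (a ^ j / j.factorial)
        < a ^ (q+1) / ((q+1).factorial : ℝ) * (a ^ (d + j) / (d + j).factorial) := by
    intro j hj
    have hj' : j ≤ q := by simpa [Nat.lt_succ_iff] using hj
    have hfact := factlt j q d hj' hd
    have h1 : a ^ (q+d+1) / ((q+d+1).factorial : ℝ) * (a ^ j / j.factorial)
        = a ^ (q+d+1+j) / (((j.factorial : ℝ)) * ((q+d+1).factorial : ℝ)) := by
      rw [pow_add]; ring
    have h2 : a ^ (q+1) / ((q+1).factorial : ℝ) * (a ^ (d + j) / (d + j).factorial)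
        = a ^ (q+d+1+j) / (((j + d).factorial : ℝ) * ((q+1).factorial : ℝ)) := by
      rw [show q+d+1+j = (q+1)+(d+j) by ring, pow_add, show d + j = j + d by ring]
      ring
    rw [h1, h2]
    apply div_lt_div_of_pos_left
    · positivity
    · positivity
    · exact_mod_cast hfact
  calc ∑ j ∈ Finset.range (q+1), a ^ (q+d+1) / ((q+d+1).factorial : ℝ) * (a ^ j / j.factorial)
      < ∑ j ∈ Finset.range (q+1), a ^ (q+1) / ((q+1).factorial : ℝ) * (a ^ (d + j) / (d + j).factorial) :=
        Finset.sum_lt_sum_of_nonempty Finset.nonempty_range_add_one key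
    _ = ∑ k ∈ Finset.Ico d (q+1+d), a ^ (q+1) / ((q+1).factorial : ℝ) * (a ^ k / k.factorial) := by
        rw [Finset.sum_Ico_eq_sum_range]
        simp
    _ ≤ ∑ k ∈ Finset.range (q+d+1), a ^ (q+1) / ((q+1).factorial : ℝ) * (a ^ k / k.factorial) := by
        apply Finset.sum_le_sum_of_subset_of_nonneg
        · intro x hx
          simp only [Finset.mem_Ico] at hx
          simp only [Finset.mem_range]
          omega
        · intro i _ _
          positivity

lemma step {a : ℝ} (ha : 0 < a) {p q : ℕ} (h : q < p) :
    s (p+1) a * s q a < s p a * s (q+1) a := by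
  have h1 : s (p+1) a = s p a + a ^ (p+1) / (p+1).factorial := by
    rw [s, s, Finset.sum_range_succ]
  have h2 : s (q+1) a = s q a + a ^ (q+1) / (q+1).factorial := by
    rw [s, s, Finset.sum_range_succ]
  rw [h1, h2]
  have := core ha h
  nlinarith [spos p ha, spos q ha]

lemma chain {a : ℝ} (ha : 0 < a) : ∀ (j u v : ℕ), 1 ≤ j → u + j ≤ v →
    s (v + j) a * s u a < s v a * s (u + j) a := by
  intro j
  induction j with
  | zero => omega
  | succ j ih =>
    intro u v _ huv
    rcases Nat.eq_zero_or_pos j with rfl | hj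
    · simpa using step ha (show u < v by omega)
    · have h1 : s (v + (j+1)) a * s u a < s (v + j) a * s (u + 1) a := by
        have := step ha (show u < v + j by omega)
        simpa [show v + (j+1) = (v+j)+1 by ring] using this
      have h2 : s (v + j) a * s (u+1) a < s v a * s ((u+1) + j) a :=
        ih (u+1) v hj (by omega)
      calc s (v + (j+1)) a * s u a < s (v + j) a * s (u + 1) a := h1
        _ < s v a * s ((u+1) + j) a := h2
        _ = s v a * s (u + (j+1)) a := by rw [show (u+1)+j = u+(j+1) by ring]

theorem stmt_2 (a : ℝ) (ha : 0 < a) (n m l : ℕ)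
    (hl : 1 ≤ l) (hlm : l < m) (hmn : m ≤ n) :
    s n a * s (n - m) a < s (n - l) a * s (n - m + l) a := by
  set l' := min l (m - l) with hl'
  have hl'1 : 1 ≤ l' := by omega
  have hmain : s n a * s (n - m) a < s (n - l') a * s (n - m + l') a := by
    have := chain ha l' (n - m) (n - l') hl'1 (by omega)
    rwa [show n - l' + l' = n by omega, show n - m + l' = n - m + l' from rfl] at this
  rcases le_or_gt l (m - l) with hcase | hcase
  · have : l' = l := by omega
    rwa [this] at hmain
  · have h1 : l' = m - l := by omega
    have h2 : n - l' = n - m + l := by omega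
    have h3 : n - m + l' = n - l := by omega
    rw [h1] at hmain
    rw [show n - (m - l) = n - m + l by omega, show n - m + (m - l) = n - l by omega] at hmain
    linarith [hmain]
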